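/- Let α and β be irrational real numbers. Then the subsets {m + n·α : m, n ∈ ℤ} and {m + n·β : m, n ∈ ℤ} of ℝ are equal if and only if there exist ε ∈ {1, −1} and k ∈ ℤ with α = ε·β + k. -/

import Mathlib

/-- For irrational reals `α`, `β`, the lattices `ℤ + αℤ` and `ℤ + βℤ` coincide
if and only if `α = ±β + k` for some integer `k`. -/
theorem stmt_0 (α β : ℝ) (hα : Irrational α) (hβ : Irrational β) :
    ({x : ℝ | ∃ m n : ℤ, x = (m : ℝ) + (n : ℝ) * α} =
      {x : ℝ | ∃ m n : ℤ, x = (m : ℝ) + (n : ℝ) * β}) ↔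
    ∃ ε : ℝ, (ε = 1 ∨ ε = -1) ∧ ∃ k : ℤ, α = ε * β + (k : ℝ) := by
  constructor
  · intro h
    have hαmem : α ∈ {x : ℝ | ∃ m n : ℤ, x = (m : ℝ) + (n : ℝ) * β} := by
      rw [← h]; exact ⟨0, 1, by push_cast; ring⟩
    have hβmem : β ∈ {x : ℝ | ∃ m n : ℤ, x = (m : ℝ) + (n : ℝ) * α} := by
      rw [h]; exact ⟨0, 1, by push_cast; ring⟩
    obtain ⟨m, n, hmn⟩ := hαmem
    obtain ⟨p, q, hpq⟩ := hβmem
    rw [hmn] at hpq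
    have key : β * (1 - (q : ℝ) * n) = (p : ℝ) + q * m := by
      push_cast at hpq
      linear_combination hpq
    have hqn : q * n = 1 := by
      by_contra hne
      have h0 : (1 : ℝ) - (q : ℝ) * n ≠ 0 := by
        intro h0
        have : ((q * n : ℤ) : ℝ) = ((1 : ℤ) : ℝ) := by push_cast; linarith
        exact hne (by exact_mod_cast this)
      have : β = (((p + q * m : ℤ) : ℚ) / ((1 - q * n : ℤ) : ℚ) : ℚ) := by
        push_cast
        field_simp
        linear_combination key
      exact hβ ⟨_, this.symm⟩
    have hn : n = 1 ∨ n = -1 :=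
      Int.isUnit_iff.mp (IsUnit.of_mul_eq_one (a := n) q (by rw [mul_comm]; exact hqn))
    rcases hn with hn | hn
    · exact ⟨1, Or.inl rfl, m, by rw [hmn, hn]; push_cast; ring⟩
    · exact ⟨-1, Or.inr rfl, m, by rw [hmn, hn]; push_cast; ring⟩
  · rintro ⟨ε, hε, k, hk⟩
    ext x
    simp only [Set.mem_setOf_eq]
    constructor
    · rintro ⟨m, n, rfl⟩
      rcases hε with rfl | rfl
      · exact ⟨m + n * k, n, by rw [hk]; push_cast; ring⟩
      · exact ⟨m + n * k, -n, by rw [hk]; push_cast; ring⟩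
    · rintro ⟨m, n, rfl⟩
      rcases hε with rfl | rfl
      · exact ⟨m - n * k, n, by rw [hk]; push_cast; ring⟩
      · exact ⟨m + n * k, -n, by rw [hk]; push_cast; ring⟩
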